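/- Let X, Y, Z, X', Y', Z', f_x, f_y, b, δ be real numbers with f_x > 0, f_y > 0, δ ≥ 0, b ≥ 0. Suppose that for all θ ∈ [−b, b]: (i) 0 < Z'·cos θ − Y'·sin θ ≤ Z·cos θ − Y·sin θ; (ii) |f_x·X/(Z·cos θ − Y·sin θ) − f_x·X'/(Z'·cos θ − Y'·sin θ)| ≤ δ; and (iii) |f_y·(Y·cos θ + Z·sin θ)/(Z·cos θ − Y·sin θ) − f_y·(Y'·cos θ + Z'·sin θ)/(Z'·cos θ − Y'·sin θ)| ≤ δ. Then max (⨆_{θ ∈ [−b,b]} f_x·|X·(Y·cos θ + Z·sin θ)|/(Z·cos θ − Y·sin θ)²) (⨆_{θ ∈ [−b,b]} f_y·(Y² + Z²)/(Z·cos θ − Y·sin θ)²) ≤ max (⨆_{θ ∈ [−b,b]} f_x·|X'·(Y'·cos θ + Z'·sin θ)|/(Z'·cos θ − Y'·sin θ)²) (⨆_{θ ∈ [−b,b]} f_y·(Y'² + Z'²)/(Z'·cos θ − Y'·sin θ)²) + δ²/f_y + max_{θ ∈ {−b, b}} max ((δ/f_y)·(f_x·|X'| + f_y·|Y'·cos θ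 + Z'·sin θ|)/(Z'·cos θ − Y'·sin θ)) (2·δ·|Y'·cos θ + Z'·sin θ|/(Z'·cos θ − Y'·sin θ)). -/

import Mathlib

private lemma mydiv {a b c : ℝ} (h : a ≤ b) (hc : 0 < c) : a / c ≤ b / c := by
  simpa [div_eq_mul_inv] using mul_le_mul_of_nonneg_right h (inv_nonneg.mpr hc.le)

private lemma pyth (Y Z θ : ℝ) :
    (Y * Real.cos θ + Z * Real.sin θ) ^ 2 + (Z * Real.cos θ - Y * Real.sin θ) ^ 2
      = Y ^ 2 + Z ^ 2 := by
  have h := Real.sin_sq_add_cos_sq θ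
  linear_combination (Y ^ 2 + Z ^ 2) * h

private lemma auxCabs (A B eθ em dθ dm : ℝ) (hA : 0 ≤ A) (hB : 0 ≤ B)
    (hdm : 0 < dm) (hdle : dm ≤ dθ) (habs : |eθ| / dθ ≤ |em| / dm) :
    (A + B * |eθ|) / dθ ≤ (A + B * |em|) / dm := by
  have hdθ : 0 < dθ := lt_of_lt_of_le hdm hdle
  have h1 : A / dθ ≤ A / dm := by gcongr
  have h2 : B * |eθ| / dθ ≤ B * |em| / dm := by
    rw [mul_div_assoc, mul_div_assoc]
    exact mul_le_mul_of_nonneg_left habs hB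
  calc (A + B * |eθ|) / dθ = A / dθ + B * |eθ| / dθ := by ring
    _ ≤ A / dm + B * |em| / dm := add_le_add h1 h2
    _ = (A + B * |em|) / dm := by ring

private lemma auxA (fx fy δ x e x' e' D D' : ℝ) (hfx : 0 < fx) (hfy : 0 < fy)
    (hD : 0 < D) (hD' : 0 < D') (hδ : 0 ≤ δ)
    (h1 : fx * |x| / D ≤ fx * |x'| / D' + δ)
    (h2 : fy * |e| / D ≤ fy * |e'| / D' + δ) :
    fx * |x * e| / D ^ 2 ≤
      fx * |x' * e'| / D' ^ 2 + δ / fy * (fx * |x'| + fy * |e'|) / D' + δ ^ 2 / fy := by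
  have ha0 : 0 ≤ fx * |x| / D := by positivity
  have hc0 : 0 ≤ fy * |e| / D := by positivity
  have hc'δ : (0:ℝ) ≤ fy * |e'| / D' + δ := by positivity
  have key : (fx * |x| / D) * (fy * |e| / D) ≤
      (fx * |x'| / D') * (fy * |e'| / D') +
        δ * (fx * |x'| / D' + fy * |e'| / D') + δ ^ 2 := by
    nlinarith [mul_le_mul h1 h2 hc0 (by positivity : (0:ℝ) ≤ fx * |x'| / D' + δ)]
  have hDne := hD.ne'
  have hD'ne := hD'.ne'
  have hfyne := hfy.ne'
  have e1 : fx * |x * e| / D ^ 2 = (fx * |x| / D) * (fy * |e| / D) / fy := by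
    rw [abs_mul]; field_simp
  have e2 : fx * |x' * e'| / D' ^ 2 + δ / fy * (fx * |x'| + fy * |e'|) / D' + δ ^ 2 / fy
      = ((fx * |x'| / D') * (fy * |e'| / D') +
          δ * (fx * |x'| / D' + fy * |e'| / D') + δ ^ 2) / fy := by
    rw [abs_mul]; field_simp
  rw [e1, e2]
  exact mydiv key hfy

private lemma auxB (fy δ e e' D D' : ℝ) (hfy : 0 < fy) (hD : 0 < D) (hD' : 0 < D') (hδ : 0 ≤ δ)
    (h2 : fy * |e| / D ≤ fy * |e'| / D' + δ) :
    fy * (e ^ 2 + D ^ 2) / D ^ 2 ≤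
      fy * (e' ^ 2 + D' ^ 2) / D' ^ 2 + 2 * δ * |e'| / D' + δ ^ 2 / fy := by
  have hc0 : 0 ≤ fy * |e| / D := by positivity
  have key : (fy * |e| / D) ^ 2 ≤ (fy * |e'| / D') ^ 2 + 2 * δ * (fy * |e'| / D') + δ ^ 2 := by
    nlinarith [h2, hc0]
  have hDne := hD.ne'
  have hD'ne := hD'.ne'
  have hfyne := hfy.ne'
  have e1 : fy * (e ^ 2 + D ^ 2) / D ^ 2 = (fy * |e| / D) ^ 2 / fy + fy := by
    rw [div_pow, mul_pow, sq_abs]; field_simp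
  have e2 : fy * (e' ^ 2 + D' ^ 2) / D' ^ 2 + 2 * δ * |e'| / D' + δ ^ 2 / fy
      = ((fy * |e'| / D') ^ 2 + 2 * δ * (fy * |e'| / D') + δ ^ 2) / fy + fy := by
    rw [div_pow, mul_pow, sq_abs]; field_simp; ring
  rw [e1, e2]
  exact add_le_add_left (mydiv key hfy) fy

set_option maxHeartbeats 1000000 in
theorem lipschitz_relaxation_rotation_x (X Y Z X' Y' Z' fx fy b δ : ℝ)
    (hfx : 0 < fx) (hfy : 0 < fy) (hδ : 0 ≤ δ) (hb : 0 ≤ b)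
    (hdepth : ∀ θ ∈ Set.Icc (-b) b,
      0 < Z' * Real.cos θ - Y' * Real.sin θ ∧
      Z' * Real.cos θ - Y' * Real.sin θ ≤ Z * Real.cos θ - Y * Real.sin θ)
    (h1 : ∀ θ ∈ Set.Icc (-b) b,
      |fx * X / (Z * Real.cos θ - Y * Real.sin θ) -
        fx * X' / (Z' * Real.cos θ - Y' * Real.sin θ)| ≤ δ)
    (h2 : ∀ θ ∈ Set.Icc (-b) b,
      |fy * (Y * Real.cos θ + Z * Real.sin θ) / (Z * Real.cos θ - Y * Real.sin θ) -
        fy * (Y' * Real.cos θ + Z' * Real.sin θ) /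
          (Z' * Real.cos θ - Y' * Real.sin θ)| ≤ δ) :
    max (⨆ θ : Set.Icc (-b) b,
          fx * |X * (Y * Real.cos (θ : ℝ) + Z * Real.sin (θ : ℝ))| /
            (Z * Real.cos (θ : ℝ) - Y * Real.sin (θ : ℝ)) ^ 2)
        (⨆ θ : Set.Icc (-b) b,
          fy * (Y ^ 2 + Z ^ 2) /
            (Z * Real.cos (θ : ℝ) - Y * Real.sin (θ : ℝ)) ^ 2) ≤
      max (⨆ θ : Set.Icc (-b) b,
            fx * |X' * (Y' * Real.cos (θ : ℝ) + Z' * Real.sin (θ : ℝ))| /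
              (Z' * Real.cos (θ : ℝ) - Y' * Real.sin (θ : ℝ)) ^ 2)
          (⨆ θ : Set.Icc (-b) b,
            fy * (Y' ^ 2 + Z' ^ 2) /
              (Z' * Real.cos (θ : ℝ) - Y' * Real.sin (θ : ℝ)) ^ 2) +
        δ ^ 2 / fy +
        max
          (max
            ((δ / fy) * (fx * |X'| + fy * |Y' * Real.cos (-b) + Z' * Real.sin (-b)|) /
              (Z' * Real.cos (-b) - Y' * Real.sin (-b)))
            (2 * δ * |Y' * Real.cos (-b) + Z' * Real.sin (-b)| /
              (Z' * Real.cos (-b) - Y' * Real.sin (-b))))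
          (max
            ((δ / fy) * (fx * |X'| + fy * |Y' * Real.cos b + Z' * Real.sin b|) /
              (Z' * Real.cos b - Y' * Real.sin b))
            (2 * δ * |Y' * Real.cos b + Z' * Real.sin b| /
              (Z' * Real.cos b - Y' * Real.sin b))) := by
  have hbb : -b ≤ b := by linarith
  haveI hne : Nonempty (Set.Icc (-b) b) := (Set.nonempty_Icc.mpr hbb).to_subtype
  have hmb : -b ∈ Set.Icc (-b) b := Set.left_mem_Icc.mpr hbb
  have hpb : b ∈ Set.Icc (-b) b := Set.right_mem_Icc.mpr hbb
  have h0m : (0 : ℝ) ∈ Set.Icc (-b) b := ⟨by linarith, hb⟩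
  have hZ' : 0 < Z' := by simpa using (hdepth 0 h0m).1
  have hr2 : 0 < Y' ^ 2 + Z' ^ 2 := by positivity
  -- b < π/2
  have hbpi : b < Real.pi / 2 := by
    by_contra hcon
    push_neg at hcon
    have hmem : Real.pi - b ∈ Set.Icc (-b) b :=
      ⟨by linarith [Real.pi_pos.le], by linarith⟩
    have ha := (hdepth (Real.pi - b) hmem).1
    have hb2 := (hdepth (-b) hmb).1
    rw [Real.cos_pi_sub, Real.sin_pi_sub] at ha
    rw [Real.cos_neg, Real.sin_neg] at hb2
    nlinarith
  -- monotonicity of e'/d'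
  have hmono : ∀ θ₁ ∈ Set.Icc (-b) b, ∀ θ₂ ∈ Set.Icc (-b) b, θ₁ ≤ θ₂ →
      (Y' * Real.cos θ₁ + Z' * Real.sin θ₁) / (Z' * Real.cos θ₁ - Y' * Real.sin θ₁) ≤
      (Y' * Real.cos θ₂ + Z' * Real.sin θ₂) / (Z' * Real.cos θ₂ - Y' * Real.sin θ₂) := by
    intro θ₁ h₁ θ₂ h₂ h12
    have hd1 := (hdepth θ₁ h₁).1
    have hd2 := (hdepth θ₂ h₂).1
    rw [div_le_div_iff₀ hd1 hd2]
    have hs : 0 ≤ Real.sin (θ₂ - θ₁) :=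
      Real.sin_nonneg_of_nonneg_of_le_pi (by linarith)
        (by linarith [h₁.1, h₂.2, hbpi])
    have hid : (Y' * Real.cos θ₂ + Z' * Real.sin θ₂) * (Z' * Real.cos θ₁ - Y' * Real.sin θ₁)
        - (Y' * Real.cos θ₁ + Z' * Real.sin θ₁) * (Z' * Real.cos θ₂ - Y' * Real.sin θ₂)
        = (Y' ^ 2 + Z' ^ 2) * Real.sin (θ₂ - θ₁) := by
      rw [Real.sin_sub]; ring
    nlinarith [mul_nonneg hr2.le hs]
  have htabs : ∀ θ ∈ Set.Icc (-b) b,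
      |(Y' * Real.cos θ + Z' * Real.sin θ) / (Z' * Real.cos θ - Y' * Real.sin θ)| ≤
        max |(Y' * Real.cos (-b) + Z' * Real.sin (-b)) / (Z' * Real.cos (-b) - Y' * Real.sin (-b))|
            |(Y' * Real.cos b + Z' * Real.sin b) / (Z' * Real.cos b - Y' * Real.sin b)| := by
    intro θ hθ
    exact abs_le_max_abs_abs (hmono _ hmb _ hθ hθ.1) (hmono _ hθ _ hpb hθ.2)
  -- from |t θ| ≤ |t m| get the two key comparisons
  have step : ∀ m ∈ Set.Icc (-b) b, ∀ θ ∈ Set.Icc (-b) b,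
      |(Y' * Real.cos θ + Z' * Real.sin θ) / (Z' * Real.cos θ - Y' * Real.sin θ)| ≤
        |(Y' * Real.cos m + Z' * Real.sin m) / (Z' * Real.cos m - Y' * Real.sin m)| →
      |Y' * Real.cos θ + Z' * Real.sin θ| / (Z' * Real.cos θ - Y' * Real.sin θ) ≤
        |Y' * Real.cos m + Z' * Real.sin m| / (Z' * Real.cos m - Y' * Real.sin m) ∧
      Z' * Real.cos m - Y' * Real.sin m ≤ Z' * Real.cos θ - Y' * Real.sin θ := by
    intro m hm θ hθ ht
    have hdθ := (hdepth θ hθ).1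
    have hdm := (hdepth m hm).1
    rw [abs_div, abs_div, abs_of_pos hdθ, abs_of_pos hdm] at ht
    refine ⟨ht, ?_⟩
    have hcross : |Y' * Real.cos θ + Z' * Real.sin θ| * (Z' * Real.cos m - Y' * Real.sin m) ≤
        |Y' * Real.cos m + Z' * Real.sin m| * (Z' * Real.cos θ - Y' * Real.sin θ) :=
      (div_le_div_iff₀ hdθ hdm).mp ht
    have hsq : (Y' * Real.cos θ + Z' * Real.sin θ) ^ 2 * (Z' * Real.cos m - Y' * Real.sin m) ^ 2 ≤
        (Y' * Real.cos m + Z' * Real.sin m) ^ 2 * (Z' * Real.cos θ - Y' * Real.sin θ) ^ 2 := by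
      nlinarith [mul_self_le_mul_self
          (mul_nonneg (abs_nonneg (Y' * Real.cos θ + Z' * Real.sin θ)) hdm.le) hcross,
        sq_abs (Y' * Real.cos θ + Z' * Real.sin θ), sq_abs (Y' * Real.cos m + Z' * Real.sin m)]
    have hp1 : (Y' * Real.cos θ + Z' * Real.sin θ) ^ 2 + (Z' * Real.cos θ - Y' * Real.sin θ) ^ 2
        = Y' ^ 2 + Z' ^ 2 := by
      linear_combination (Y' ^ 2 + Z' ^ 2) * Real.sin_sq_add_cos_sq θ
    have hp2 : (Y' * Real.cos m + Z' * Real.sin m) ^ 2 + (Z' * Real.cos m - Y' * Real.sin m) ^ 2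
        = Y' ^ 2 + Z' ^ 2 := by
      linear_combination (Y' ^ 2 + Z' ^ 2) * Real.sin_sq_add_cos_sq m
    have h7 : (Y' ^ 2 + Z' ^ 2) * (Z' * Real.cos m - Y' * Real.sin m) ^ 2 ≤
        (Y' ^ 2 + Z' ^ 2) * (Z' * Real.cos θ - Y' * Real.sin θ) ^ 2 := by
      nlinarith [hsq, hp1, hp2]
    have h6 : (Z' * Real.cos m - Y' * Real.sin m) ^ 2 ≤ (Z' * Real.cos θ - Y' * Real.sin θ) ^ 2 :=
      le_of_mul_le_mul_left h7 hr2
    nlinarith [h6, hdm, hdθ]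
  -- choose the dominating endpoint m
  obtain ⟨m, hmmem, hmcase, hmprop⟩ :
      ∃ m, m ∈ Set.Icc (-b) b ∧ (m = -b ∨ m = b) ∧
        ∀ θ ∈ Set.Icc (-b) b,
          |Y' * Real.cos θ + Z' * Real.sin θ| / (Z' * Real.cos θ - Y' * Real.sin θ) ≤
            |Y' * Real.cos m + Z' * Real.sin m| / (Z' * Real.cos m - Y' * Real.sin m) ∧
          Z' * Real.cos m - Y' * Real.sin m ≤ Z' * Real.cos θ - Y' * Real.sin θ := by
    rcases le_total
        |(Y' * Real.cos (-b) + Z' * Real.sin (-b)) / (Z' * Real.cos (-b) - Y' * Real.sin (-b))|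
        |(Y' * Real.cos b + Z' * Real.sin b) / (Z' * Real.cos b - Y' * Real.sin b)| with hc | hc
    · exact ⟨b, hpb, Or.inr rfl, fun θ hθ =>
        step b hpb θ hθ ((htabs θ hθ).trans_eq (max_eq_right hc))⟩
    · exact ⟨-b, hmb, Or.inl rfl, fun θ hθ =>
        step (-b) hmb θ hθ ((htabs θ hθ).trans_eq (max_eq_left hc))⟩
  have hdm := (hdepth m hmmem).1
  -- bounds of the correction terms by the big max
  have hCb1 : δ / fy * (fx * |X'| + fy * |Y' * Real.cos m + Z' * Real.sin m|) /
      (Z' * Real.cos m - Y' * Real.sin m) ≤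
      max
        (max
          ((δ / fy) * (fx * |X'| + fy * |Y' * Real.cos (-b) + Z' * Real.sin (-b)|) /
            (Z' * Real.cos (-b) - Y' * Real.sin (-b)))
          (2 * δ * |Y' * Real.cos (-b) + Z' * Real.sin (-b)| /
            (Z' * Real.cos (-b) - Y' * Real.sin (-b))))
        (max
          ((δ / fy) * (fx * |X'| + fy * |Y' * Real.cos b + Z' * Real.sin b|) /
            (Z' * Real.cos b - Y' * Real.sin b))
          (2 * δ * |Y' * Real.cos b + Z' * Real.sin b| /
            (Z' * Real.cos b - Y' * Real.sin b))) := by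
    rcases hmcase with rfl | rfl
    · exact le_trans (le_max_left _ _) (le_max_left _ _)
    · exact le_trans (le_max_left _ _) (le_max_right _ _)
  have hCb2 : 2 * δ * |Y' * Real.cos m + Z' * Real.sin m| /
      (Z' * Real.cos m - Y' * Real.sin m) ≤
      max
        (max
          ((δ / fy) * (fx * |X'| + fy * |Y' * Real.cos (-b) + Z' * Real.sin (-b)|) /
            (Z' * Real.cos (-b) - Y' * Real.sin (-b)))
          (2 * δ * |Y' * Real.cos (-b) + Z' * Real.sin (-b)| /
            (Z' * Real.cos (-b) - Y' * Real.sin (-b))))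
        (max
          ((δ / fy) * (fx * |X'| + fy * |Y' * Real.cos b + Z' * Real.sin b|) /
            (Z' * Real.cos b - Y' * Real.sin b))
          (2 * δ * |Y' * Real.cos b + Z' * Real.sin b| /
            (Z' * Real.cos b - Y' * Real.sin b))) := by
    rcases hmcase with rfl | rfl
    · exact le_trans (le_max_right _ _) (le_max_left _ _)
    · exact le_trans (le_max_right _ _) (le_max_right _ _)
  -- pointwise bounds on the primed sup integrands (for BddAbove)
  have hptb1 : ∀ θ ∈ Set.Icc (-b) b,
      fx * |X' * (Y' * Real.cos θ + Z' * Real.sin θ)| / (Z' * Real.cos θ - Y' * Real.sin θ) ^ 2 ≤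
      fx * |X' * (Y' * Real.cos m + Z' * Real.sin m)| / (Z' * Real.cos m - Y' * Real.sin m) ^ 2 := by
    intro θ hθ
    have hdθ := (hdepth θ hθ).1
    obtain ⟨habs, hdle⟩ := hmprop θ hθ
    have h1' : |Y' * Real.cos θ + Z' * Real.sin θ| / (Z' * Real.cos θ - Y' * Real.sin θ) ^ 2 ≤
        |Y' * Real.cos m + Z' * Real.sin m| / (Z' * Real.cos m - Y' * Real.sin m) ^ 2 := by
      have h2' : (1 : ℝ) / (Z' * Real.cos θ - Y' * Real.sin θ) ≤
          1 / (Z' * Real.cos m - Y' * Real.sin m) := one_div_le_one_div_of_le hdm hdle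
      calc |Y' * Real.cos θ + Z' * Real.sin θ| / (Z' * Real.cos θ - Y' * Real.sin θ) ^ 2
          = (|Y' * Real.cos θ + Z' * Real.sin θ| / (Z' * Real.cos θ - Y' * Real.sin θ)) *
            (1 / (Z' * Real.cos θ - Y' * Real.sin θ)) := by
            rw [pow_two, ← div_div, div_eq_mul_one_div]
        _ ≤ (|Y' * Real.cos m + Z' * Real.sin m| / (Z' * Real.cos m - Y' * Real.sin m)) *
            (1 / (Z' * Real.cos m - Y' * Real.sin m)) :=
            mul_le_mul habs h2' (by positivity) (by positivity)
        _ = |Y' * Real.cos m + Z' * Real.sin m| / (Z' * Real.cos m - Y' * Real.sin m) ^ 2 := by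
            rw [div_mul_div_comm, mul_one, ← pow_two]
    calc fx * |X' * (Y' * Real.cos θ + Z' * Real.sin θ)| / (Z' * Real.cos θ - Y' * Real.sin θ) ^ 2
        = fx * |X'| *
          (|Y' * Real.cos θ + Z' * Real.sin θ| / (Z' * Real.cos θ - Y' * Real.sin θ) ^ 2) := by
          rw [abs_mul]; ring
      _ ≤ fx * |X'| *
          (|Y' * Real.cos m + Z' * Real.sin m| / (Z' * Real.cos m - Y' * Real.sin m) ^ 2) :=
          mul_le_mul_of_nonneg_left h1' (by positivity)
      _ = fx * |X' * (Y' * Real.cos m + Z' * Real.sin m)| /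
          (Z' * Real.cos m - Y' * Real.sin m) ^ 2 := by rw [abs_mul]; ring
  have hptb2 : ∀ θ ∈ Set.Icc (-b) b,
      fy * (Y' ^ 2 + Z' ^ 2) / (Z' * Real.cos θ - Y' * Real.sin θ) ^ 2 ≤
      fy * (Y' ^ 2 + Z' ^ 2) / (Z' * Real.cos m - Y' * Real.sin m) ^ 2 := by
    intro θ hθ
    have hdθ := (hdepth θ hθ).1
    have hdle := (hmprop θ hθ).2
    gcongr
  have hB1 : BddAbove (Set.range fun θ : Set.Icc (-b) b =>
      fx * |X' * (Y' * Real.cos (θ : ℝ) + Z' * Real.sin (θ : ℝ))| /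
        (Z' * Real.cos (θ : ℝ) - Y' * Real.sin (θ : ℝ)) ^ 2) := by
    refine ⟨fx * |X' * (Y' * Real.cos m + Z' * Real.sin m)| /
      (Z' * Real.cos m - Y' * Real.sin m) ^ 2, ?_⟩
    rintro x ⟨θ, rfl⟩
    exact hptb1 θ θ.2
  have hB2 : BddAbove (Set.range fun θ : Set.Icc (-b) b =>
      fy * (Y' ^ 2 + Z' ^ 2) / (Z' * Real.cos (θ : ℝ) - Y' * Real.sin (θ : ℝ)) ^ 2) := by
    refine ⟨fy * (Y' ^ 2 + Z' ^ 2) / (Z' * Real.cos m - Y' * Real.sin m) ^ 2, ?_⟩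
    rintro x ⟨θ, rfl⟩
    exact hptb2 θ θ.2
  apply max_le
  · apply ciSup_le
    intro θ
    obtain ⟨hD'pos, hDle⟩ := hdepth θ θ.2
    have hDpos : 0 < Z * Real.cos (θ : ℝ) - Y * Real.sin (θ : ℝ) := lt_of_lt_of_le hD'pos hDle
    -- normalized closeness hypotheses
    have h1' : fx * |X| / (Z * Real.cos (θ : ℝ) - Y * Real.sin (θ : ℝ)) ≤
        fx * |X'| / (Z' * Real.cos (θ : ℝ) - Y' * Real.sin (θ : ℝ)) + δ := by
      have t1 := abs_sub_abs_le_abs_sub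
        (fx * X / (Z * Real.cos (θ : ℝ) - Y * Real.sin (θ : ℝ)))
        (fx * X' / (Z' * Real.cos (θ : ℝ) - Y' * Real.sin (θ : ℝ)))
      have t2 : |fx * X / (Z * Real.cos (θ : ℝ) - Y * Real.sin (θ : ℝ))| ≤
          |fx * X' / (Z' * Real.cos (θ : ℝ) - Y' * Real.sin (θ : ℝ))| + δ := by
        linarith [h1 θ θ.2]
      rwa [abs_div, abs_div, abs_mul, abs_mul, abs_of_pos hfx, abs_of_pos hDpos,
        abs_of_pos hD'pos] at t2
    have h2' : fy * |Y * Real.cos (θ : ℝ) + Z * Real.sin (θ : ℝ)| /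
        (Z * Real.cos (θ : ℝ) - Y * Real.sin (θ : ℝ)) ≤
        fy * |Y' * Real.cos (θ : ℝ) + Z' * Real.sin (θ : ℝ)| /
        (Z' * Real.cos (θ : ℝ) - Y' * Real.sin (θ : ℝ)) + δ := by
      have t1 := abs_sub_abs_le_abs_sub
        (fy * (Y * Real.cos (θ : ℝ) + Z * Real.sin (θ : ℝ)) /
          (Z * Real.cos (θ : ℝ) - Y * Real.sin (θ : ℝ)))
        (fy * (Y' * Real.cos (θ : ℝ) + Z' * Real.sin (θ : ℝ)) /
          (Z' * Real.cos (θ : ℝ) - Y' * Real.sin (θ : ℝ)))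
      have t2 : |fy * (Y * Real.cos (θ : ℝ) + Z * Real.sin (θ : ℝ)) /
          (Z * Real.cos (θ : ℝ) - Y * Real.sin (θ : ℝ))| ≤
          |fy * (Y' * Real.cos (θ : ℝ) + Z' * Real.sin (θ : ℝ)) /
          (Z' * Real.cos (θ : ℝ) - Y' * Real.sin (θ : ℝ))| + δ := by
        linarith [h2 θ θ.2]
      rwa [abs_div, abs_div, abs_mul, abs_mul, abs_of_pos hfy, abs_of_pos hDpos,
        abs_of_pos hD'pos] at t2
    have hA := auxA fx fy δ X (Y * Real.cos (θ : ℝ) + Z * Real.sin (θ : ℝ)) X'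
      (Y' * Real.cos (θ : ℝ) + Z' * Real.sin (θ : ℝ))
      (Z * Real.cos (θ : ℝ) - Y * Real.sin (θ : ℝ))
      (Z' * Real.cos (θ : ℝ) - Y' * Real.sin (θ : ℝ)) hfx hfy hDpos hD'pos hδ h1' h2'
    have hS : fx * |X' * (Y' * Real.cos (θ : ℝ) + Z' * Real.sin (θ : ℝ))| /
        (Z' * Real.cos (θ : ℝ) - Y' * Real.sin (θ : ℝ)) ^ 2 ≤
        ⨆ θ : Set.Icc (-b) b,
          fx * |X' * (Y' * Real.cos (θ : ℝ) + Z' * Real.sin (θ : ℝ))| /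
            (Z' * Real.cos (θ : ℝ) - Y' * Real.sin (θ : ℝ)) ^ 2 := le_ciSup hB1 θ
    have hM : δ / fy * (fx * |X'| + fy * |Y' * Real.cos (θ : ℝ) + Z' * Real.sin (θ : ℝ)|) /
        (Z' * Real.cos (θ : ℝ) - Y' * Real.sin (θ : ℝ)) ≤
        max
          (max
            ((δ / fy) * (fx * |X'| + fy * |Y' * Real.cos (-b) + Z' * Real.sin (-b)|) /
              (Z' * Real.cos (-b) - Y' * Real.sin (-b)))
            (2 * δ * |Y' * Real.cos (-b) + Z' * Real.sin (-b)| /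
              (Z' * Real.cos (-b) - Y' * Real.sin (-b))))
          (max
            ((δ / fy) * (fx * |X'| + fy * |Y' * Real.cos b + Z' * Real.sin b|) /
              (Z' * Real.cos b - Y' * Real.sin b))
            (2 * δ * |Y' * Real.cos b + Z' * Real.sin b| /
              (Z' * Real.cos b - Y' * Real.sin b))) := by
      have heq : ∀ w : ℝ, δ / fy * (fx * |X'| + fy * |w|) = δ * (fx * |X'|) / fy + δ * |w| := by
        intro w
        field_simp
      calc δ / fy * (fx * |X'| + fy * |Y' * Real.cos (θ : ℝ) + Z' * Real.sin (θ : ℝ)|) /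
            (Z' * Real.cos (θ : ℝ) - Y' * Real.sin (θ : ℝ))
          = (δ * (fx * |X'|) / fy + δ * |Y' * Real.cos (θ : ℝ) + Z' * Real.sin (θ : ℝ)|) /
            (Z' * Real.cos (θ : ℝ) - Y' * Real.sin (θ : ℝ)) := by rw [heq]
        _ ≤ (δ * (fx * |X'|) / fy + δ * |Y' * Real.cos m + Z' * Real.sin m|) /
            (Z' * Real.cos m - Y' * Real.sin m) :=
            auxCabs _ _ _ _ _ _ (by positivity) hδ hdm (hmprop θ θ.2).2 (hmprop θ θ.2).1
        _ = δ / fy * (fx * |X'| + fy * |Y' * Real.cos m + Z' * Real.sin m|) /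
            (Z' * Real.cos m - Y' * Real.sin m) := by rw [heq]
        _ ≤ _ := hCb1
    have hmax1 := le_max_left
      (⨆ θ : Set.Icc (-b) b,
        fx * |X' * (Y' * Real.cos (θ : ℝ) + Z' * Real.sin (θ : ℝ))| /
          (Z' * Real.cos (θ : ℝ) - Y' * Real.sin (θ : ℝ)) ^ 2)
      (⨆ θ : Set.Icc (-b) b,
        fy * (Y' ^ 2 + Z' ^ 2) / (Z' * Real.cos (θ : ℝ) - Y' * Real.sin (θ : ℝ)) ^ 2)
    linarith
  · apply ciSup_le
    intro θ
    obtain ⟨hD'pos, hDle⟩ := hdepth θ θ.2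
    have hDpos : 0 < Z * Real.cos (θ : ℝ) - Y * Real.sin (θ : ℝ) := lt_of_lt_of_le hD'pos hDle
    have h2' : fy * |Y * Real.cos (θ : ℝ) + Z * Real.sin (θ : ℝ)| /
        (Z * Real.cos (θ : ℝ) - Y * Real.sin (θ : ℝ)) ≤
        fy * |Y' * Real.cos (θ : ℝ) + Z' * Real.sin (θ : ℝ)| /
        (Z' * Real.cos (θ : ℝ) - Y' * Real.sin (θ : ℝ)) + δ := by
      have t1 := abs_sub_abs_le_abs_sub
        (fy * (Y * Real.cos (θ : ℝ) + Z * Real.sin (θ : ℝ)) /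
          (Z * Real.cos (θ : ℝ) - Y * Real.sin (θ : ℝ)))
        (fy * (Y' * Real.cos (θ : ℝ) + Z' * Real.sin (θ : ℝ)) /
          (Z' * Real.cos (θ : ℝ) - Y' * Real.sin (θ : ℝ)))
      have t2 : |fy * (Y * Real.cos (θ : ℝ) + Z * Real.sin (θ : ℝ)) /
          (Z * Real.cos (θ : ℝ) - Y * Real.sin (θ : ℝ))| ≤
          |fy * (Y' * Real.cos (θ : ℝ) + Z' * Real.sin (θ : ℝ)) /
          (Z' * Real.cos (θ : ℝ) - Y' * Real.sin (θ : ℝ))| + δ := by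
        linarith [h2 θ θ.2]
      rwa [abs_div, abs_div, abs_mul, abs_mul, abs_of_pos hfy, abs_of_pos hDpos,
        abs_of_pos hD'pos] at t2
    have hBB := auxB fy δ (Y * Real.cos (θ : ℝ) + Z * Real.sin (θ : ℝ))
      (Y' * Real.cos (θ : ℝ) + Z' * Real.sin (θ : ℝ))
      (Z * Real.cos (θ : ℝ) - Y * Real.sin (θ : ℝ))
      (Z' * Real.cos (θ : ℝ) - Y' * Real.sin (θ : ℝ)) hfy hDpos hD'pos hδ h2'
    have hpy : (Y * Real.cos (θ : ℝ) + Z * Real.sin (θ : ℝ)) ^ 2 +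
        (Z * Real.cos (θ : ℝ) - Y * Real.sin (θ : ℝ)) ^ 2 = Y ^ 2 + Z ^ 2 := by
      linear_combination (Y ^ 2 + Z ^ 2) * Real.sin_sq_add_cos_sq (θ : ℝ)
    have hpy' : (Y' * Real.cos (θ : ℝ) + Z' * Real.sin (θ : ℝ)) ^ 2 +
        (Z' * Real.cos (θ : ℝ) - Y' * Real.sin (θ : ℝ)) ^ 2 = Y' ^ 2 + Z' ^ 2 := by
      linear_combination (Y' ^ 2 + Z' ^ 2) * Real.sin_sq_add_cos_sq (θ : ℝ)
    rw [hpy, hpy'] at hBB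
    have hS : fy * (Y' ^ 2 + Z' ^ 2) / (Z' * Real.cos (θ : ℝ) - Y' * Real.sin (θ : ℝ)) ^ 2 ≤
        ⨆ θ : Set.Icc (-b) b,
          fy * (Y' ^ 2 + Z' ^ 2) / (Z' * Real.cos (θ : ℝ) - Y' * Real.sin (θ : ℝ)) ^ 2 :=
      le_ciSup hB2 θ
    have hM : 2 * δ * |Y' * Real.cos (θ : ℝ) + Z' * Real.sin (θ : ℝ)| /
        (Z' * Real.cos (θ : ℝ) - Y' * Real.sin (θ : ℝ)) ≤
        max
          (max
            ((δ / fy) * (fx * |X'| + fy * |Y' * Real.cos (-b) + Z' * Real.sin (-b)|) /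
              (Z' * Real.cos (-b) - Y' * Real.sin (-b)))
            (2 * δ * |Y' * Real.cos (-b) + Z' * Real.sin (-b)| /
              (Z' * Real.cos (-b) - Y' * Real.sin (-b))))
          (max
            ((δ / fy) * (fx * |X'| + fy * |Y' * Real.cos b + Z' * Real.sin b|) /
              (Z' * Real.cos b - Y' * Real.sin b))
            (2 * δ * |Y' * Real.cos b + Z' * Real.sin b| /
              (Z' * Real.cos b - Y' * Real.sin b))) := by
      calc 2 * δ * |Y' * Real.cos (θ : ℝ) + Z' * Real.sin (θ : ℝ)| /
            (Z' * Real.cos (θ : ℝ) - Y' * Real.sin (θ : ℝ))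
          = (0 + 2 * δ * |Y' * Real.cos (θ : ℝ) + Z' * Real.sin (θ : ℝ)|) /
            (Z' * Real.cos (θ : ℝ) - Y' * Real.sin (θ : ℝ)) := by ring_nf
        _ ≤ (0 + 2 * δ * |Y' * Real.cos m + Z' * Real.sin m|) /
            (Z' * Real.cos m - Y' * Real.sin m) :=
            auxCabs _ _ _ _ _ _ le_rfl (by positivity) hdm (hmprop θ θ.2).2 (hmprop θ θ.2).1
        _ = 2 * δ * |Y' * Real.cos m + Z' * Real.sin m| /
            (Z' * Real.cos m - Y' * Real.sin m) := by ring_nf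
        _ ≤ _ := hCb2
    have hmax2 := le_max_right
      (⨆ θ : Set.Icc (-b) b,
        fx * |X' * (Y' * Real.cos (θ : ℝ) + Z' * Real.sin (θ : ℝ))| /
          (Z' * Real.cos (θ : ℝ) - Y' * Real.sin (θ : ℝ)) ^ 2)
      (⨆ θ : Set.Icc (-b) b,
        fy * (Y' ^ 2 + Z' ^ 2) / (Z' * Real.cos (θ : ℝ) - Y' * Real.sin (θ : ℝ)) ^ 2)
    linarith
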